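/- arXiv:1709.05375 — 3 statements merged into one kernel-verified Lean document; each statement's English description precedes it below -/
import Mathlib

section
/- For all u ∈ H²(Ω̂) with Ω̂ = (0,1)²: (i) u and Π̂u coincide at the four corners of Ω̂; and (ii) on each edge of Ω̂, the restriction of Π̂u coincides with the univariate projector Π_{p,h} applied to the restriction of u to that edge; e.g., for the edge Γ̂ = {0} × (0,1), one has (Π̂u)(0,·) = Π_{p,h}(u(0,·)), and analogously for the other three edges. -/
open MeasureTheory Set intervalIntegral

noncomputable section

/-- `u ∈ H¹(0,1)` with weak derivative `du`: both are square integrable on `(0,1)` and `u`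
is the integral of `du` (so that `u` is the continuous representative on `[0,1]`). -/
def MemH1 (u du : ℝ → ℝ) : Prop :=
  MemLp u 2 (volume.restrict (Ioo (0:ℝ) 1)) ∧
  MemLp du 2 (volume.restrict (Ioo (0:ℝ) 1)) ∧
  IntervalIntegrable du volume 0 1 ∧
  ∀ x ∈ Icc (0:ℝ) 1, u x = u 0 + ∫ t in (0:ℝ)..x, du t

/-- The spline space `S_{p,h}` with `h = 1/m`: `C^{p-1}` functions on `(0,1)`, continuous
up to the boundary, which restricted to each `((j-1)h, jh]` are polynomials of degree `≤ p`. -/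
def IsSpline (p m : ℕ) (v : ℝ → ℝ) : Prop :=
  ContinuousOn v (Icc (0:ℝ) 1) ∧
  ContDiffOn ℝ (p - 1 : ℕ) v (Ioo (0:ℝ) 1) ∧
  ∀ j : ℕ, j < m → ∃ q : Polynomial ℝ, q.natDegree ≤ p ∧
    ∀ x : ℝ, (j : ℝ) / m < x → x ≤ ((j : ℝ) + 1) / m → v x = q.eval x

/-- `w = Π_{p,h} u`, the orthogonal projection of `u` (with weak derivative `du`) onto the
spline space with respect to the scalar product
`(u,v)_{H¹_D} = ∫₀¹ u' v' + u(0) v(0)`. -/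
def IsProj (p m : ℕ) (u du w : ℝ → ℝ) : Prop :=
  IsSpline p m w ∧
  ∀ v : ℝ → ℝ, IsSpline p m v →
    (∫ t in (0:ℝ)..1, (du t - deriv w t) * deriv v t) + (u 0 - w 0) * v 0 = 0


/-- Slice-wise `H²` data for a function `u` on the unit square `Ω̂ = (0,1)²`:
`ux, uy, uxx, uxy, uyy` are the partial derivatives of `u` (slice-wise weak derivatives). -/
structure H2DataSq (u ux uy uxx uxy uyy : ℝ → ℝ → ℝ) : Prop where
  hx  : ∀ y ∈ Icc (0:ℝ) 1, MemH1 (fun x => u x y) (fun x => ux x y)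
  hy  : ∀ x ∈ Icc (0:ℝ) 1, MemH1 (fun y => u x y) (fun y => uy x y)
  hxx : ∀ y ∈ Icc (0:ℝ) 1, MemH1 (fun x => ux x y) (fun x => uxx x y)
  hxy : ∀ x ∈ Icc (0:ℝ) 1, MemH1 (fun y => ux x y) (fun y => uxy x y)
  hyx : ∀ y ∈ Icc (0:ℝ) 1, MemH1 (fun x => uy x y) (fun x => uxy x y)
  hyy : ∀ x ∈ Icc (0:ℝ) 1, MemH1 (fun y => uy x y) (fun y => uyy x y)

/-- `w = Π̂ u = Π^x_{p,h} Π^y_{p,h} u`, the tensor-product projector applied to `u`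
(`uy` is the partial derivative `∂_y u`): first every slice `u(x,·)` is projected by
`Π_{p,h}` (giving `w1`), then every slice `w1(·,y)` is projected by `Π_{p,h}`
(`w1x` is the slice-wise weak `x`-derivative of `w1`). -/
def IsTensorProj (p m : ℕ) (u uy w : ℝ → ℝ → ℝ) : Prop :=
  ∃ w1 w1x : ℝ → ℝ → ℝ,
    (∀ x ∈ Icc (0:ℝ) 1, IsProj p m (fun y => u x y) (fun y => uy x y) (fun y => w1 x y)) ∧
    (∀ y ∈ Icc (0:ℝ) 1, MemH1 (fun x => w1 x y) (fun x => w1x x y)) ∧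
    (∀ y ∈ Icc (0:ℝ) 1, IsProj p m (fun x => w1 x y) (fun x => w1x x y) (fun x => w x y))

lemma isSpline_const (p m : ℕ) (c : ℝ) : IsSpline p m (fun _ => c) :=
  ⟨continuousOn_const, contDiffOn_const, fun j _ => ⟨Polynomial.C c, by simp, fun x _ _ => by simp⟩⟩

lemma isSpline_id (p m : ℕ) (hp : 1 ≤ p) : IsSpline p m (fun x => x) :=
  ⟨continuousOn_id, contDiffOn_id, fun j _ =>
    ⟨Polynomial.X, by simpa using hp, fun x _ _ => by simp⟩⟩

section splinefacts

variable {p m : ℕ} {v : ℝ → ℝ}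

lemma spline_hasDerivAt (hv : IsSpline p m v) {j : ℕ} (hj : j < m)
    {x : ℝ} (hx : x ∈ Ioo ((j:ℝ)/m) (((j:ℝ)+1)/m)) :
    HasDerivAt v (deriv v x) x ∧
      deriv v x = ((hv.2.2 j hj).choose).derivative.eval x := by
  obtain ⟨hq, hval⟩ := (hv.2.2 j hj).choose_spec
  set q := (hv.2.2 j hj).choose
  have hev : v =ᶠ[nhds x] fun y => q.eval y := by
    filter_upwards [isOpen_Ioo.mem_nhds hx] with y hy
    exact hval y hy.1 hy.2.le
  have hd : HasDerivAt v (q.derivative.eval x) x :=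
    (q.hasDerivAt x).congr_of_eventuallyEq hev
  have h2 := hd.deriv
  exact ⟨h2 ▸ hd, h2⟩

lemma spline_intervalIntegrable_piece (hv : IsSpline p m v) {j : ℕ} (hj : j < m) :
    IntervalIntegrable (deriv v) volume ((j:ℝ)/m) (((j:ℝ)+1)/m) := by
  have hm0 : (0:ℝ) < m := by exact_mod_cast Nat.zero_lt_of_lt hj
  have hab : ((j:ℝ)/m) ≤ ((j:ℝ)+1)/m := by gcongr; linarith
  obtain ⟨hq, hval⟩ := (hv.2.2 j hj).choose_spec
  set q := (hv.2.2 j hj).choose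
  rw [intervalIntegrable_iff_integrableOn_Ioc_of_le hab]
  have hcont : IntegrableOn (fun x => q.derivative.eval x)
      (Ioc ((j:ℝ)/m) (((j:ℝ)+1)/m)) volume :=
    (Polynomial.continuous _).continuousOn.integrableOn_Icc.mono_set Ioc_subset_Icc_self
  refine hcont.congr_fun_ae ?_
  rw [Filter.EventuallyEq, ae_restrict_iff' measurableSet_Ioc]
  filter_upwards [compl_mem_ae_iff.2 (measure_singleton (((j:ℝ)+1)/m))] with x hx hxIoc
  have hxIoo : x ∈ Ioo ((j:ℝ)/m) (((j:ℝ)+1)/m) :=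
    ⟨hxIoc.1, lt_of_le_of_ne hxIoc.2 (by simpa using hx)⟩
  exact ((spline_hasDerivAt hv hj hxIoo).2).symm

lemma spline_ftc_piece (hv : IsSpline p m v) {j : ℕ} (hj : j < m) :
    ∫ t in ((j:ℝ)/m)..(((j:ℝ)+1)/m), deriv v t = v (((j:ℝ)+1)/m) - v ((j:ℝ)/m) := by
  have hm0 : (0:ℝ) < m := by exact_mod_cast Nat.zero_lt_of_lt hj
  have hab : ((j:ℝ)/m) ≤ ((j:ℝ)+1)/m := by gcongr; linarith
  have hsub : Icc ((j:ℝ)/m) (((j:ℝ)+1)/m) ⊆ Icc (0:ℝ) 1 := by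
    apply Icc_subset_Icc
    · positivity
    · rw [div_le_one hm0]; exact_mod_cast hj
  exact integral_eq_sub_of_hasDeriv_right_of_le hab (hv.1.mono hsub)
    (fun x hx => ((spline_hasDerivAt hv hj hx).1).hasDerivWithinAt)
    (spline_intervalIntegrable_piece hv hj)

lemma spline_deriv_intervalIntegrable (hv : IsSpline p m v) (hm : 1 ≤ m) :
    IntervalIntegrable (deriv v) volume 0 1 := by
  have hm0 : (0:ℝ) < m := by exact_mod_cast hm
  have h := IntervalIntegrable.trans_iterate (μ := volume) (f := deriv v)
    (a := fun j : ℕ => (j:ℝ)/m) (n := m)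
    (fun k hk => by
      have := spline_intervalIntegrable_piece hv hk
      convert this using 2
      push_cast; ring)
  simpa [div_self hm0.ne'] using h

lemma spline_ftc (hv : IsSpline p m v) (hm : 1 ≤ m) :
    v 1 = v 0 + ∫ t in (0:ℝ)..1, deriv v t := by
  have hm0 : (0:ℝ) < m := by exact_mod_cast hm
  have hsum := intervalIntegral.sum_integral_adjacent_intervals (μ := volume) (f := deriv v)
    (a := fun j : ℕ => (j:ℝ)/m) (n := m)
    (fun k hk => by
      have := spline_intervalIntegrable_piece hv hk
      convert this using 2
      push_cast; ring)
  have hpieces : ∀ k ∈ Finset.range m,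
      (∫ t in ((k:ℝ)/m)..(((k+1:ℕ):ℝ)/m), deriv v t) = v (((k+1:ℕ):ℝ)/m) - v ((k:ℝ)/m) := by
    intro k hk
    have := spline_ftc_piece hv (Finset.mem_range.1 hk)
    convert this using 2 <;> push_cast <;> ring
  have htel : ∑ k ∈ Finset.range m, (∫ t in ((k:ℝ)/m)..(((k+1:ℕ):ℝ)/m), deriv v t)
      = v (((m:ℕ):ℝ)/m) - v (((0:ℕ):ℝ)/m) := by
    rw [Finset.sum_congr rfl hpieces]
    exact Finset.sum_range_sub (fun j : ℕ => v ((j:ℝ)/m)) m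
  rw [htel] at hsum
  simp only [Nat.cast_zero, zero_div, div_self hm0.ne'] at hsum
  linarith [hsum]

end splinefacts


section projfacts

variable {p m : ℕ} {f g w : ℝ → ℝ}

lemma IsProj.eq_at_zero (h : IsProj p m f g w) : w 0 = f 0 := by
  have h1 := h.2 (fun _ => 1) (isSpline_const p m 1)
  simp only [deriv_const', mul_zero, mul_one, intervalIntegral.integral_zero, zero_add] at h1
  linarith

lemma IsProj.eq_at_one (hp : 1 ≤ p) (hm : 1 ≤ m) (h : IsProj p m f g w)
    (hf : MemH1 f g) : w 1 = f 1 := by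
  have h0 := h.eq_at_zero
  have hid := h.2 (fun x => x) (isSpline_id p m hp)
  have hdid : deriv (fun x : ℝ => x) = fun _ => (1:ℝ) := by
    funext t; exact deriv_id t
  rw [hdid] at hid
  simp only [mul_one, mul_zero, add_zero] at hid
  have hsplit : (∫ t in (0:ℝ)..1, (g t - deriv w t))
      = (∫ t in (0:ℝ)..1, g t) - ∫ t in (0:ℝ)..1, deriv w t :=
    intervalIntegral.integral_sub hf.2.2.1 (spline_deriv_intervalIntegrable h.1 hm)
  have hwf : w 1 = w 0 + ∫ t in (0:ℝ)..1, deriv w t := spline_ftc h.1 hm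
  have hff : f 1 = f 0 + ∫ t in (0:ℝ)..1, g t := hf.2.2.2 1 ⟨zero_le_one, le_refl 1⟩
  rw [hsplit] at hid
  rw [hwf, hff, h0]
  linarith

lemma deriv_eq_on_Ioo {a b : ℝ} {w' : ℝ → ℝ} (hw' : ∀ x ∈ Ioo a b, w' x = w x)
    {t : ℝ} (ht : t ∈ Ioo a b) : deriv w' t = deriv w t := by
  apply Filter.EventuallyEq.deriv_eq
  filter_upwards [isOpen_Ioo.mem_nhds ht] with y hy
  exact hw' y hy

lemma IsProj.congr_w (hm : 1 ≤ m) (h : IsProj p m f g w) {w' : ℝ → ℝ}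
    (hw' : ∀ x ∈ Icc (0:ℝ) 1, w' x = w x) : IsProj p m f g w' := by
  have hIoo : ∀ x ∈ Ioo (0:ℝ) 1, w' x = w x := fun x hx => hw' x (Ioo_subset_Icc_self hx)
  constructor
  · refine ⟨h.1.1.congr hw', h.1.2.1.congr hIoo, fun j hj => ?_⟩
    obtain ⟨q, hq, hval⟩ := h.1.2.2 j hj
    refine ⟨q, hq, fun x hx1 hx2 => ?_⟩
    have hm0 : (0:ℝ) < m := by exact_mod_cast Nat.zero_lt_of_lt hj
    have hxmem : x ∈ Icc (0:ℝ) 1 := by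
      constructor
      · have : (0:ℝ) ≤ (j:ℝ)/m := by positivity
        linarith
      · calc x ≤ ((j:ℝ)+1)/m := hx2
          _ ≤ 1 := by rw [div_le_one hm0]; exact_mod_cast hj
    rw [hw' x hxmem]; exact hval x hx1 hx2
  · intro v hv
    have h2 := h.2 v hv
    have hint : (∫ t in (0:ℝ)..1, (g t - deriv w' t) * deriv v t)
        = ∫ t in (0:ℝ)..1, (g t - deriv w t) * deriv v t := by
      apply intervalIntegral.integral_congr_ae
      filter_upwards [compl_mem_ae_iff.2 (measure_singleton (1:ℝ))] with t ht htI
      rw [uIoc_of_le zero_le_one] at htI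
      have htIoo : t ∈ Ioo (0:ℝ) 1 := ⟨htI.1, lt_of_le_of_ne htI.2 (by simpa using ht)⟩
      rw [deriv_eq_on_Ioo hIoo htIoo]
    rw [hint, hw' 0 ⟨le_refl 0, zero_le_one⟩]
    exact h2

lemma IsProj.congr_data (h : IsProj p m f g w) {f' g' : ℝ → ℝ} (hf0 : f' 0 = f 0)
    (hg : ∀ᵐ t, t ∈ Ioo (0:ℝ) 1 → g' t = g t) : IsProj p m f' g' w := by
  refine ⟨h.1, fun v hv => ?_⟩
  have h2 := h.2 v hv
  have hint : (∫ t in (0:ℝ)..1, (g' t - deriv w t) * deriv v t)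
      = ∫ t in (0:ℝ)..1, (g t - deriv w t) * deriv v t := by
    apply intervalIntegral.integral_congr_ae
    filter_upwards [hg, compl_mem_ae_iff.2 (measure_singleton (1:ℝ))] with t ht ht1 htI
    rw [uIoc_of_le zero_le_one] at htI
    have htIoo : t ∈ Ioo (0:ℝ) 1 := ⟨htI.1, lt_of_le_of_ne htI.2 (by simpa using ht1)⟩
    rw [ht htIoo]
  rw [hint, hf0]
  exact h2

end projfacts

open Metric Filter Topology in
lemma leb_diff (f : ℝ → ℝ) (hf : LocallyIntegrable f volume) :
    ∀ᵐ x, Tendsto (fun r => ⨍ y in closedBall x r, f y) (𝓝[>] 0) (𝓝 (f x)) := by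
  filter_upwards [IsUnifLocDoublingMeasure.ae_tendsto_average (μ := volume) hf 1] with x hx
  exact hx (fun _ => x) id tendsto_id (eventually_mem_nhdsWithin.mono fun r hr => by
    simp only [Metric.mem_closedBall, dist_self, one_mul]; exact (mem_Ioi.1 hr).le)

open Metric Filter Topology in
lemma weakDeriv_ae_eq {f g f' g' : ℝ → ℝ} (hf : MemH1 f g) (hf' : MemH1 f' g')
    (heq : ∀ x ∈ Icc (0:ℝ) 1, f x = f' x) :
    ∀ᵐ t, t ∈ Ioo (0:ℝ) 1 → g t = g' t := by
  set d : ℝ → ℝ := fun t => g t - g' t with hd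
  have hint : IntervalIntegrable d volume 0 1 := hf.2.2.1.sub hf'.2.2.1
  have hintx : ∀ x ∈ Icc (0:ℝ) 1, IntervalIntegrable d volume 0 x := fun x hx =>
    hint.mono_set (uIcc_subset_uIcc (by simp) (by simp [mem_uIcc]; exact hx))
  have hF : ∀ x ∈ Icc (0:ℝ) 1, (∫ t in (0:ℝ)..x, d t) = 0 := by
    intro x hx
    have h1 : (∫ t in (0:ℝ)..x, d t) = (∫ t in (0:ℝ)..x, g t) - ∫ t in (0:ℝ)..x, g' t :=
      intervalIntegral.integral_sub
        (hf.2.2.1.mono_set (uIcc_subset_uIcc (by simp) (by simp [mem_uIcc]; exact hx)))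
        (hf'.2.2.1.mono_set (uIcc_subset_uIcc (by simp) (by simp [mem_uIcc]; exact hx)))
    have h2 := hf.2.2.2 x hx
    have h3 := hf'.2.2.2 x hx
    have h4 := heq x hx
    have h5 := heq 0 ⟨le_refl 0, zero_le_one⟩
    rw [h1]; rw [h4, h3, h5] at h2; linarith
  set D : ℝ → ℝ := (Ioo (0:ℝ) 1).indicator d with hD
  have hDint : Integrable D volume := by
    rw [hD, integrable_indicator_iff measurableSet_Ioo]
    exact ((intervalIntegrable_iff_integrableOn_Ioc_of_le zero_le_one).1 hint).mono_set
      Ioo_subset_Ioc_self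
  filter_upwards [leb_diff D hDint.locallyIntegrable] with x hx hxIoo
  have hε : (0:ℝ) < min x (1 - x) := lt_min hxIoo.1 (by linarith [hxIoo.2])
  have hav : ∀ᶠ r in 𝓝[>] (0:ℝ), (⨍ y in closedBall x r, D y) = 0 := by
    filter_upwards [Ioo_mem_nhdsGT_of_mem ⟨le_refl (0:ℝ), hε⟩] with r hr
    have hr1 : 0 < x - r := by have := hr.2; have := lt_min_iff.1 hr.2; linarith [this.1]
    have hr2 : x + r < 1 := by have := lt_min_iff.1 hr.2; linarith [this.2]
    have hrpos : 0 < r := hr.1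
    have hsub : Icc (x - r) (x + r) ⊆ Ioo (0:ℝ) 1 := fun y hy =>
      ⟨lt_of_lt_of_le hr1 hy.1, lt_of_le_of_lt hy.2 hr2⟩
    have hz : (∫ y in closedBall x r, D y) = 0 := by
      rw [Real.closedBall_eq_Icc, hD, setIntegral_indicator measurableSet_Ioo,
        inter_eq_self_of_subset_left hsub, integral_Icc_eq_integral_Ioc,
        ← intervalIntegral.integral_of_le (by linarith)]
      have hxr1 : x + r ∈ Icc (0:ℝ) 1 := ⟨by linarith, by linarith⟩
      have hxr2 : x - r ∈ Icc (0:ℝ) 1 := ⟨by linarith, by linarith⟩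
      rw [← intervalIntegral.integral_interval_sub_left (hintx _ hxr1) (hintx _ hxr2),
        hF _ hxr1, hF _ hxr2, sub_zero]
    rw [setAverage_eq, hz, smul_zero]
  have h0 : Tendsto (fun r => ⨍ y in closedBall x r, D y) (𝓝[>] (0:ℝ)) (𝓝 0) :=
    Tendsto.congr' (by filter_upwards [hav] with r hr using hr.symm) tendsto_const_nhds
  have hDx : D x = 0 := tendsto_nhds_unique hx h0
  have : d x = 0 := by rwa [hD, indicator_of_mem hxIoo] at hDx
  simp only [hd] at this; linarith [this]


/-- Theorem 3 of the paper.  For all `u ∈ H²((0,1)²)`: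
(i) `u` and `Π̂ u` coincide at the four corners of the unit square, and
(ii) on each of the four edges, the restriction of `Π̂ u` is the univariate projection
`Π_{p,h}` of the corresponding restriction of `u` (expressed by the `IsProj` predicate, which
characterizes `Π_{p,h}` via `H¹_D`-orthogonality). -/
theorem statement6 (p m : ℕ) (hp : 1 ≤ p) (hm : 1 ≤ m)
    (u ux uy uxx uxy uyy : ℝ → ℝ → ℝ)
    (hu : H2DataSq u ux uy uxx uxy uyy)
    (w : ℝ → ℝ → ℝ) (hw : IsTensorProj p m u uy w) :
    (w 0 0 = u 0 0 ∧ w 1 0 = u 1 0 ∧ w 0 1 = u 0 1 ∧ w 1 1 = u 1 1) ∧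
    IsProj p m (fun y => u 0 y) (fun y => uy 0 y) (fun y => w 0 y) ∧
    IsProj p m (fun y => u 1 y) (fun y => uy 1 y) (fun y => w 1 y) ∧
    IsProj p m (fun x => u x 0) (fun x => ux x 0) (fun x => w x 0) ∧
    IsProj p m (fun x => u x 1) (fun x => ux x 1) (fun x => w x 1) := by
  obtain ⟨w1, w1x, hw1, hw1H1, hw2⟩ := hw
  have h01 : (0:ℝ) ∈ Icc (0:ℝ) 1 := ⟨le_refl 0, zero_le_one⟩
  have h11 : (1:ℝ) ∈ Icc (0:ℝ) 1 := ⟨zero_le_one, le_refl 1⟩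
  have hw0 : ∀ y ∈ Icc (0:ℝ) 1, w 0 y = w1 0 y := fun y hy => (hw2 y hy).eq_at_zero
  have hw1e : ∀ y ∈ Icc (0:ℝ) 1, w 1 y = w1 1 y := fun y hy =>
    (hw2 y hy).eq_at_one hp hm (hw1H1 y hy)
  have hb0 : ∀ x ∈ Icc (0:ℝ) 1, w1 x 0 = u x 0 := fun x hx => (hw1 x hx).eq_at_zero
  have hb1 : ∀ x ∈ Icc (0:ℝ) 1, w1 x 1 = u x 1 := fun x hx =>
    (hw1 x hx).eq_at_one hp hm (hu.hy x hx)
  refine ⟨⟨?_, ?_, ?_, ?_⟩, ?_, ?_, ?_, ?_⟩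
  · exact (hw0 0 h01).trans (hb0 0 h01)
  · exact (hw1e 0 h01).trans (hb0 1 h11)
  · exact (hw0 1 h11).trans (hb1 0 h01)
  · exact (hw1e 1 h11).trans (hb1 1 h11)
  · exact (hw1 0 h01).congr_w hm hw0
  · exact (hw1 1 h11).congr_w hm hw1e
  · refine (hw2 0 h01).congr_data (hb0 0 h01).symm ?_
    have := weakDeriv_ae_eq (hu.hx 0 h01) (hw1H1 0 h01) (fun x hx => (hb0 x hx).symm)
    filter_upwards [this] with t ht htIoo
    exact ht htIoo
  · refine (hw2 1 h11).congr_data (hb1 0 h01).symm ?_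
    have := weakDeriv_ae_eq (hu.hx 1 h11) (hw1H1 1 h11) (fun x hx => (hb1 x hx).symm)
    filter_upwards [this] with t ht htIoo
    exact ht htIoo
end
end

section
/- Let A, M, L be symmetric positive definite N×N real matrices, let h > 0, and let P be an N×N_H real matrix of full column rank with coarse-grid matrix A_H := Pᵀ A P. Let Π_H denote the A-orthogonal projection onto the range of P, and let c_A > 0 be such that ‖(I − Π_H)u‖²_M ≤ 4 c_A² h² ‖u‖²_A for all u ∈ ℝᴺ (approximation property). Assume c̲ A ≤ L ≤ c̄ (A + h⁻² M) for constants c̲, c̄ > 0 (in the sense of quadratic forms). Then for every τ ∈ (0, c̲] and every integer ν > ν₀ := τ⁻¹ c̄ (1 + 4 c_A²), the two-grid error propagation matrix E := (I − P A_H⁻¹ Pᵀ A)(I − τ L⁻¹ A)^ν satisfies ‖E u‖_{A + h⁻²M} ≤ (ν₀/ν) ‖u‖_{A + h⁻²M} for all u ∈ ℝᴺ. Equivalently, the two-grid method consisting of ν smoothing steps u ↦ u + τ L⁻¹(f − A u) followed by exact coarse-grid correction converges with rate q = ν₀/ν in the norm induced by A + h⁻²M. -/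
open Matrix

noncomputable section

section TGAuxiliary

variable {n m : ℕ}

private lemma transposeEqOfHerm {B : Matrix (Fin n) (Fin n) ℝ} (hB : B.IsHermitian) : Bᵀ = B := by
  rw [← conjTranspose_eq_transpose_of_trivial]; exact hB

private lemma dotShift (B : Matrix (Fin n) (Fin m) ℝ) (x : Fin n → ℝ) (y : Fin m → ℝ) :
    x ⬝ᵥ B.mulVec y = (Bᵀ.mulVec x) ⬝ᵥ y := by
  rw [dotProduct_mulVec, ← vecMul_transpose, transpose_transpose]

private lemma dotSym {B : Matrix (Fin n) (Fin n) ℝ} (hB : B.IsHermitian) (x y : Fin n → ℝ) :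
    x ⬝ᵥ B.mulVec y = y ⬝ᵥ B.mulVec x := by
  rw [dotShift, transposeEqOfHerm hB, dotProduct_comm]

private lemma psdNonneg {B : Matrix (Fin n) (Fin n) ℝ} (hB : B.PosSemidef) (x : Fin n → ℝ) :
    0 ≤ x ⬝ᵥ B.mulVec x := by simpa using hB.dotProduct_mulVec_nonneg x

private lemma pdPos {B : Matrix (Fin n) (Fin n) ℝ} (hB : B.PosDef) {x : Fin n → ℝ} (hx : x ≠ 0) :
    0 < x ⬝ᵥ B.mulVec x := by simpa using hB.dotProduct_mulVec_pos hx

private lemma posdefSmul {M : Matrix (Fin n) (Fin n) ℝ} (hM : M.PosDef) {c : ℝ} (hc : 0 < c) :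
    (c • M).PosDef := by
  refine posDef_iff_dotProduct_mulVec.mpr ⟨?_, fun x hx => ?_⟩
  · simp [IsHermitian, conjTranspose_smul, hM.1.eq, transposeEqOfHerm hM.1]
  · have := pdPos hM hx
    have h2 : x ⬝ᵥ (c • M).mulVec x = c * (x ⬝ᵥ M.mulVec x) := by
      rw [smul_mulVec, dotProduct_smul, smul_eq_mul]
    simpa [h2] using mul_pos hc this

private lemma csIneq {B : Matrix (Fin n) (Fin n) ℝ} (hB : B.PosSemidef) (x y : Fin n → ℝ) :
    (x ⬝ᵥ B.mulVec y) ^ 2 ≤ (x ⬝ᵥ B.mulVec x) * (y ⬝ᵥ B.mulVec y) := by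
  have key : ∀ t : ℝ, 0 ≤ (y ⬝ᵥ B.mulVec y) * (t * t) + (2 * (x ⬝ᵥ B.mulVec y)) * t
      + (x ⬝ᵥ B.mulVec x) := by
    intro t
    have h0 := psdNonneg hB (x + t • y)
    have hsym := dotSym hB.1 y x
    simp only [mulVec_add, mulVec_smul, dotProduct_add, add_dotProduct, smul_dotProduct,
      dotProduct_smul, smul_eq_mul] at h0
    rw [hsym] at h0
    nlinarith [h0]
  have hd := discrim_le_zero key
  simp only [discrim] at hd
  nlinarith [hd]

private lemma invAntitone {B C : Matrix (Fin n) (Fin n) ℝ} (hB : B.PosDef) (hC : C.PosDef)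
    (hBC : ∀ u, u ⬝ᵥ B.mulVec u ≤ u ⬝ᵥ C.mulVec u) :
    ∀ y, y ⬝ᵥ C⁻¹.mulVec y ≤ y ⬝ᵥ B⁻¹.mulVec y := by
  intro y
  set x := C⁻¹.mulVec y with hxdef
  set z := B⁻¹.mulVec y with hzdef
  have hCx : C.mulVec x = y := by
    rw [hxdef, mulVec_mulVec, mul_nonsing_inv _ hC.det_pos.ne'.isUnit, one_mulVec]
  have hBz : B.mulVec z = y := by
    rw [hzdef, mulVec_mulVec, mul_nonsing_inv _ hB.det_pos.ne'.isUnit, one_mulVec]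
  have e1 : y ⬝ᵥ x = x ⬝ᵥ C.mulVec x := by
    conv_lhs => rw [← hCx]
    rw [dotProduct_comm]
  have e2 : y ⬝ᵥ z = z ⬝ᵥ B.mulVec z := by
    conv_lhs => rw [← hBz]
    rw [dotProduct_comm]
  have e3 : x ⬝ᵥ B.mulVec z = x ⬝ᵥ y := by rw [hBz]
  have e4 : z ⬝ᵥ B.mulVec x = x ⬝ᵥ B.mulVec z := dotSym hB.1 z x
  have e5 : x ⬝ᵥ y = x ⬝ᵥ C.mulVec x := by rw [← hCx]
  have hq : 0 ≤ (x - z) ⬝ᵥ B.mulVec (x - z) := psdNonneg hB.posSemidef _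
  have hcc := hBC x
  simp only [mulVec_sub, dotProduct_sub, sub_dotProduct] at hq
  have hyx : y ⬝ᵥ x = x ⬝ᵥ y := dotProduct_comm _ _
  have hyz : y ⬝ᵥ z = z ⬝ᵥ y := dotProduct_comm _ _
  have hzy : z ⬝ᵥ y = z ⬝ᵥ B.mulVec z := by rw [← hBz]
  linarith

private lemma conjPow {V W X : Matrix (Fin n) (Fin n) ℝ} (hVW : V * W = 1) (hWV : W * V = 1)
    (k : ℕ) : (V * X * W) ^ k = V * X ^ k * W := by
  induction k with
  | zero => simp [hVW]
  | succ k ih =>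
    rw [pow_succ, ih, pow_succ]
    have h1 : V * X ^ k * W * (V * X * W) = V * X ^ k * (W * V) * (X * W) := by
      simp only [Matrix.mul_assoc]
    rw [h1, hWV, Matrix.mul_one]
    simp only [Matrix.mul_assoc]

private lemma scalarBound {t : ℝ} (ht0 : 0 ≤ t) (ht1 : t ≤ 1) (ν : ℕ) :
    (ν : ℝ) * (t * (1 - t) ^ ν) ≤ 1 := by
  have h1 : 1 + (ν : ℝ) * t ≤ (1 + t) ^ ν := one_add_mul_le_pow (by linarith) ν
  have h2 : (0:ℝ) ≤ (1 - t) ^ ν := pow_nonneg (by linarith) ν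
  have h3 : ((1 + t) * (1 - t)) ^ ν ≤ 1 := by
    apply pow_le_one₀ (by nlinarith) (by nlinarith)
  have h4 : (1 + (ν : ℝ) * t) * (1 - t) ^ ν ≤ (1 + t) ^ ν * (1 - t) ^ ν :=
    mul_le_mul_of_nonneg_right h1 h2
  have h5 : (1 + t) ^ ν * (1 - t) ^ ν = ((1 + t) * (1 - t)) ^ ν := (mul_pow _ _ _).symm
  have hν0 : (0:ℝ) ≤ (ν : ℝ) := Nat.cast_nonneg ν
  nlinarith [mul_nonneg (mul_nonneg hν0 ht0) h2]

private lemma eigLeOne {T : Matrix (Fin n) (Fin n) ℝ} (hT : T.IsHermitian)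
    (h1 : ∀ x : Fin n → ℝ, x ⬝ᵥ T.mulVec x ≤ x ⬝ᵥ x) (i : Fin n) :
    hT.eigenvalues i ≤ 1 := by
  set v : Fin n → ℝ := ⇑(hT.eigenvectorBasis i) with hvdef
  have hv : T.mulVec v = hT.eigenvalues i • v := hT.mulVec_eigenvectorBasis i
  have hvne : v ≠ 0 := by
    have h := hT.eigenvectorBasis.orthonormal.ne_zero i
    intro hc
    apply h
    ext j
    exact congrFun hc j
  have hvv : 0 < v ⬝ᵥ v := by
    simpa using (dotProduct_star_self_pos_iff (v := v)).mpr hvne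
  have h2 := h1 v
  rw [hv] at h2
  simp only [dotProduct_smul, smul_eq_mul] at h2
  nlinarith

private lemma specBound {T : Matrix (Fin n) (Fin n) ℝ} (hT : T.IsHermitian) (ν : ℕ) {c : ℝ}
    (hbound : ∀ i, |hT.eigenvalues i * (1 - hT.eigenvalues i) ^ ν| ≤ c) (w : Fin n → ℝ) :
    ((T * (1 - T) ^ ν).mulVec w) ⬝ᵥ ((T * (1 - T) ^ ν).mulVec w) ≤ c ^ 2 * (w ⬝ᵥ w) := by
  set V : Matrix (Fin n) (Fin n) ℝ := (hT.eigenvectorUnitary : Matrix (Fin n) (Fin n) ℝ) with hVdef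
  have hVVs : V * star V = 1 := mem_unitaryGroup_iff.mp (hT.eigenvectorUnitary).2
  have hsVV : star V * V = 1 := mem_unitaryGroup_iff'.mp (hT.eigenvectorUnitary).2
  set lam : Fin n → ℝ := hT.eigenvalues with hlam
  have hdiag : (diagonal (RCLike.ofReal ∘ lam) : Matrix (Fin n) (Fin n) ℝ)
      = diagonal lam := by
    rw [RCLike.ofReal_real_eq_id]; rfl
  have hspec : T = V * diagonal lam * star V := by
    rw [← hdiag]; exact hT.spectral_theorem
  set g : Fin n → ℝ := fun i => lam i * (1 - lam i) ^ ν with hgdef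
  have hconj : ∀ (X : Matrix (Fin n) (Fin n) ℝ) (k : ℕ),
      (V * X * star V) ^ k = V * X ^ k * star V := by
    intro X k
    induction k with
    | zero => simp [hVVs]
    | succ k ih =>
      rw [pow_succ, ih, pow_succ]
      have h1 : V * X ^ k * star V * (V * X * star V)
          = V * X ^ k * (star V * V) * (X * star V) := by
        simp only [Matrix.mul_assoc]
      rw [h1, hsVV, Matrix.mul_one]
      simp only [Matrix.mul_assoc]
  have hsub : (1 : Matrix (Fin n) (Fin n) ℝ) - T
      = V * diagonal (fun i => 1 - lam i) * star V := by
    have h1 : (1 : Matrix (Fin n) (Fin n) ℝ) = V * 1 * star V := by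
      rw [Matrix.mul_one, hVVs]
    conv_lhs => rw [h1, hspec]
    rw [← Matrix.sub_mul, ← Matrix.mul_sub]
    congr 1
    rw [← diagonal_one, diagonal_sub]
  have hTg : T * (1 - T) ^ ν = V * diagonal g * star V := by
    rw [hsub, hconj, hspec]
    have h1 : V * diagonal lam * star V
        * (V * diagonal (fun i => (1 - lam i)) ^ ν * star V)
        = V * diagonal lam * (star V * V) * (diagonal (fun i => (1 - lam i)) ^ ν * star V) := by
      simp only [Matrix.mul_assoc]
    rw [h1, hsVV, Matrix.mul_one, diagonal_pow]
    have h2 : V * diagonal lam * (diagonal ((fun i => (1 - lam i)) ^ ν) * star V)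
        = V * (diagonal lam * diagonal ((fun i => (1 - lam i)) ^ ν)) * star V := by
      simp only [Matrix.mul_assoc]
    rw [h2, diagonal_mul_diagonal]
    have h3 : (fun i => lam i * ((fun i => 1 - lam i) ^ ν) i) = g := by
      funext i
      simp [hgdef]
    rw [h3]
  have hVt : star V = Vᵀ := by
    rw [star_eq_conjTranspose, conjTranspose_eq_transpose_of_trivial]
  set z : Fin n → ℝ := Vᵀ.mulVec w with hzdef
  have hdg : diagonal g *ᵥ z = fun i => g i * z i := by
    ext i
    rw [mulVec_diagonal]
  have hBw : (T * (1 - T) ^ ν).mulVec w = V.mulVec (fun i => g i * z i) := by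
    rw [hTg, hVt, ← mulVec_mulVec, ← mulVec_mulVec, ← hzdef, hdg]
  have hiso : ∀ y : Fin n → ℝ, (V.mulVec y) ⬝ᵥ (V.mulVec y) = y ⬝ᵥ y := by
    intro y
    rw [dotProduct_mulVec, ← vecMul_transpose, vecMul_vecMul]
    have h9 : Vᵀ * V = 1 := by rw [← hVt, hsVV]
    rw [h9, vecMul_one]
  have hz : z ⬝ᵥ z = w ⬝ᵥ w := by
    rw [hzdef, dotProduct_mulVec, ← vecMul_transpose, transpose_transpose, vecMul_vecMul]
    have h9 : V * Vᵀ = 1 := by rw [← hVt, hVVs]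
    rw [h9, vecMul_one]
  rw [hBw, hiso, ← hz]
  simp only [dotProduct, Finset.mul_sum]
  apply Finset.sum_le_sum
  intro i _
  have hb : |lam i * (1 - lam i) ^ ν| ≤ c := hbound i
  have hb2 : g i ^ 2 ≤ c ^ 2 := by
    have := abs_nonneg (g i)
    nlinarith [sq_abs (g i)]
  nlinarith [sq_nonneg (z i)]

end TGAuxiliary

/-- `B₁ ≤ B₂` in the sense of quadratic forms: `uᵀ B₁ u ≤ uᵀ B₂ u` for all `u`. -/
def QLE {n : ℕ} (B₁ B₂ : Matrix (Fin n) (Fin n) ℝ) : Prop :=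
  ∀ u : Fin n → ℝ, u ⬝ᵥ B₁.mulVec u ≤ u ⬝ᵥ B₂.mulVec u

/-- The norm `‖u‖_B = (uᵀ B u)^{1/2}` induced by a (positive definite) matrix `B`. -/
def matNorm {n : ℕ} (B : Matrix (Fin n) (Fin n) ℝ) (u : Fin n → ℝ) : ℝ :=
  Real.sqrt (u ⬝ᵥ B.mulVec u)

set_option maxHeartbeats 1000000 in
/-- Theorem 5 of the paper, convergence of the two-grid method.
`A, M, L` are SPD, `P` has full column rank, `A_H = Pᵀ A P`, `Π_H = P A_H⁻¹ Pᵀ A` is the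
`A`-orthogonal projection onto the range of `P`, the approximation property
`‖(I-Π_H)u‖²_M ≤ 4 c_A² h² ‖u‖²_A` holds, and `c̲ A ≤ L ≤ c̄ (A + h⁻² M)`.
Then for every `τ ∈ (0, c̲]` and every `ν > ν₀ := τ⁻¹ c̄ (1 + 4 c_A²)`, the two-grid error
propagation matrix `E = (I − P A_H⁻¹ Pᵀ A)(I − τ L⁻¹ A)^ν` contracts with rate `ν₀/ν` in the
norm induced by `A + h⁻² M`. -/
theorem statement11 (N NH : ℕ)
    (A M L : Matrix (Fin N) (Fin N) ℝ)
    (hA : A.PosDef) (hM : M.PosDef) (hL : L.PosDef)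
    (h : ℝ) (hh : 0 < h)
    (P : Matrix (Fin N) (Fin NH) ℝ) (hP : Function.Injective P.mulVec)
    (cA clo chi : ℝ) (hcA : 0 < cA) (hclo : 0 < clo) (hchi : 0 < chi)
    (happrox : ∀ u : Fin N → ℝ,
      matNorm M (((1 - P * (Pᵀ * A * P)⁻¹ * Pᵀ * A)).mulVec u) ^ 2 ≤
        4 * cA ^ 2 * h ^ 2 * matNorm A u ^ 2)
    (hlow : QLE (clo • A) L)
    (hhigh : QLE L (chi • (A + h⁻¹ ^ 2 • M))) :
    ∀ τ : ℝ, 0 < τ → τ ≤ clo →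
      ∀ ν : ℕ, τ⁻¹ * chi * (1 + 4 * cA ^ 2) < (ν : ℝ) →
        ∀ u : Fin N → ℝ,
          matNorm (A + h⁻¹ ^ 2 • M)
              (((1 - P * (Pᵀ * A * P)⁻¹ * Pᵀ * A) * (1 - τ • (L⁻¹ * A)) ^ ν).mulVec u) ≤
            (τ⁻¹ * chi * (1 + 4 * cA ^ 2) / ν) * matNorm (A + h⁻¹ ^ 2 • M) u := by
  intro τ hτ0 hτclo ν hν u
  classical
  set K : ℝ := 1 + 4 * cA ^ 2 with hKdef
  have hK1 : (1:ℝ) ≤ K := by nlinarith [sq_nonneg cA]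
  have hK0 : (0:ℝ) < K := by linarith
  have hτinv : (0:ℝ) < τ⁻¹ := inv_pos.mpr hτ0
  have hq0 : (0:ℝ) < τ⁻¹ * chi * K := by positivity
  have hνR : (0:ℝ) < (ν:ℝ) := lt_trans hq0 hν
  set X := A + h⁻¹ ^ 2 • M with hXdef
  have hXpd : X.PosDef := hA.add (posdefSmul hM (by positivity))
  have hXX : X * X⁻¹ = 1 := mul_nonsing_inv _ hXpd.det_pos.ne'.isUnit
  -- the coarse grid matrix is SPD
  set AH := Pᵀ * A * P with hAHdef
  have hAHpd : AH.PosDef := by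
    rw [posDef_iff_dotProduct_mulVec]
    constructor
    · show AHᴴ = AH
      rw [hAHdef]
      simp only [conjTranspose_mul, conjTranspose_eq_transpose_of_trivial, transpose_mul,
        transpose_transpose, transposeEqOfHerm hA.1, Matrix.mul_assoc]
    · intro x hx
      have hPx : P.mulVec x ≠ 0 := by
        intro hc
        exact hx (hP (by rw [hc, mulVec_zero]))
      have hpos := pdPos hA hPx
      have hquad : x ⬝ᵥ AH.mulVec x = (P.mulVec x) ⬝ᵥ A.mulVec (P.mulVec x) := by
        rw [hAHdef, ← mulVec_mulVec, ← mulVec_mulVec, dotShift, transpose_transpose]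
      simpa [hquad] using hpos
  have hAH1 : AH * AH⁻¹ = 1 := mul_nonsing_inv _ hAHpd.det_pos.ne'.isUnit
  have hAHinvsym : AH⁻¹ᵀ = AH⁻¹ := transposeEqOfHerm hAHpd.1.inv
  set Q := 1 - P * AH⁻¹ * Pᵀ * A with hQdef
  -- the coarse grid correction is an A-orthogonal projection
  have hPiidem : P * AH⁻¹ * Pᵀ * A * (P * AH⁻¹ * Pᵀ * A) = P * AH⁻¹ * Pᵀ * A := by
    have h1 : P * AH⁻¹ * Pᵀ * A * (P * AH⁻¹ * Pᵀ * A)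
        = P * (AH⁻¹ * (Pᵀ * A * P * (AH⁻¹ * (Pᵀ * A)))) := by
      simp only [Matrix.mul_assoc]
    rw [h1, ← hAHdef, ← Matrix.mul_assoc AH, hAH1, Matrix.one_mul]
    simp only [Matrix.mul_assoc]
  have hQidem : Q * Q = Q := by
    rw [hQdef]
    simp only [Matrix.sub_mul, Matrix.mul_sub, Matrix.one_mul, Matrix.mul_one]
    rw [hPiidem]
    abel
  have hQsymA : Qᵀ * A = A * Q := by
    rw [hQdef, transpose_sub, transpose_one, Matrix.sub_mul, Matrix.mul_sub, Matrix.one_mul,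
      Matrix.mul_one]
    congr 1
    simp only [transpose_mul, transpose_transpose, transposeEqOfHerm hA.1, hAHinvsym,
      Matrix.mul_assoc]
  -- the error vector
  set S := 1 - τ • (L⁻¹ * A) with hSdef
  set v := (S ^ ν).mulVec u with hvdef
  set e := Q.mulVec v with hedef
  have hgoalvec : (Q * S ^ ν).mulVec u = e := by rw [← mulVec_mulVec, ← hvdef]
  have hqA0 : 0 ≤ e ⬝ᵥ A.mulVec e := psdNonneg hA.posSemidef e
  have hqM0 : 0 ≤ e ⬝ᵥ M.mulVec e := psdNonneg hM.posSemidef e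
  have hqX0 : 0 ≤ e ⬝ᵥ X.mulVec e := psdNonneg hXpd.posSemidef e
  have hsplit : e ⬝ᵥ X.mulVec e = e ⬝ᵥ A.mulVec e + h⁻¹ ^ 2 * (e ⬝ᵥ M.mulVec e) := by
    rw [hXdef, add_mulVec, dotProduct_add, smul_mulVec, dotProduct_smul, smul_eq_mul]
  have hQe : Q.mulVec e = e := by rw [hedef, mulVec_mulVec, hQidem]
  -- the approximation property applied to the error
  have happ : e ⬝ᵥ M.mulVec e ≤ 4 * cA ^ 2 * h ^ 2 * (e ⬝ᵥ A.mulVec e) := by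
    have h1 := happrox e
    simp only [matNorm] at h1
    rw [Real.sq_sqrt (psdNonneg hM.posSemidef _), Real.sq_sqrt hqA0, hQe] at h1
    exact h1
  have hstepA : e ⬝ᵥ X.mulVec e ≤ K * (e ⬝ᵥ A.mulVec e) := by
    have h3 : h⁻¹ ^ 2 * (e ⬝ᵥ M.mulVec e) ≤ h⁻¹ ^ 2 * (4 * cA ^ 2 * h ^ 2 * (e ⬝ᵥ A.mulVec e)) :=
      mul_le_mul_of_nonneg_left happ (by positivity)
    have h4 : h⁻¹ ^ 2 * (4 * cA ^ 2 * h ^ 2 * (e ⬝ᵥ A.mulVec e))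
        = 4 * cA ^ 2 * (e ⬝ᵥ A.mulVec e) := by
      field_simp
      try ring
    rw [hsplit, hKdef]
    nlinarith [h3, h4]
  have hQAe : e ⬝ᵥ A.mulVec e = e ⬝ᵥ A.mulVec v := by
    calc e ⬝ᵥ A.mulVec e = e ⬝ᵥ (A * Q).mulVec v := by
          conv_rhs => rw [← mulVec_mulVec, ← hedef]
      _ = e ⬝ᵥ (Qᵀ * A).mulVec v := by rw [← hQsymA]
      _ = e ⬝ᵥ Qᵀ.mulVec (A.mulVec v) := by
          conv_rhs => rw [mulVec_mulVec]
      _ = (Q.mulVec e) ⬝ᵥ A.mulVec v := by rw [dotShift, transpose_transpose]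
      _ = e ⬝ᵥ A.mulVec v := by rw [hQe]
  set Av := A.mulVec v with hAvdef
  set bv := Av ⬝ᵥ X⁻¹.mulVec Av with hbdef
  have hb0 : 0 ≤ bv := psdNonneg hXpd.inv.posSemidef Av
  have hCS : (e ⬝ᵥ A.mulVec e) ^ 2 ≤ (e ⬝ᵥ X.mulVec e) * bv := by
    have h1 : X.mulVec (X⁻¹.mulVec Av) = Av := by
      rw [mulVec_mulVec, hXX, one_mulVec]
    have h2 := csIneq hXpd.posSemidef e (X⁻¹.mulVec Av)
    rw [h1] at h2
    have h3 : (X⁻¹.mulVec Av) ⬝ᵥ Av = bv := by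
      rw [dotProduct_comm, hbdef]
    rw [h3] at h2
    rw [hQAe]
    exact h2
  have hstepB : e ⬝ᵥ X.mulVec e ≤ K ^ 2 * bv := by
    rcases eq_or_lt_of_le hqX0 with h0 | hpos
    · rw [← h0]; positivity
    · have m1 : (e ⬝ᵥ X.mulVec e) * (e ⬝ᵥ X.mulVec e)
          ≤ (K * (e ⬝ᵥ A.mulVec e)) * (K * (e ⬝ᵥ A.mulVec e)) :=
        mul_le_mul hstepA hstepA hqX0 (by positivity)
      have m2 : (K * (e ⬝ᵥ A.mulVec e)) * (K * (e ⬝ᵥ A.mulVec e))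
          = K ^ 2 * (e ⬝ᵥ A.mulVec e) ^ 2 := by ring
      have m3 : K ^ 2 * (e ⬝ᵥ A.mulVec e) ^ 2 ≤ K ^ 2 * ((e ⬝ᵥ X.mulVec e) * bv) :=
        mul_le_mul_of_nonneg_left hCS (by positivity)
      have m4 : K ^ 2 * ((e ⬝ᵥ X.mulVec e) * bv) = (e ⬝ᵥ X.mulVec e) * (K ^ 2 * bv) := by ring
      have m5 : (e ⬝ᵥ X.mulVec e) * (e ⬝ᵥ X.mulVec e) ≤ (e ⬝ᵥ X.mulVec e) * (K ^ 2 * bv) := by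
        rw [← m4]
        exact le_trans m1 (by rw [m2]; exact m3)
      exact le_of_mul_le_mul_left m5 hpos
  -- step C : X⁻¹ ≤ chi • L⁻¹
  have hchiX : (chi • X).PosDef := posdefSmul hXpd hchi
  have hinvle := invAntitone hL hchiX (fun z => hhigh z)
  have hsmulinv : (chi • X)⁻¹ = chi⁻¹ • X⁻¹ := by
    apply inv_eq_right_inv
    rw [smul_mul_assoc, mul_smul_comm, smul_smul, hXX, mul_inv_cancel₀ hchi.ne', one_smul]
  have hstepC : bv ≤ chi * (Av ⬝ᵥ L⁻¹.mulVec Av) := by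
    have h1 := hinvle Av
    rw [hsmulinv, smul_mulVec, dotProduct_smul, smul_eq_mul, ← hbdef] at h1
    have h2 : bv = chi * (chi⁻¹ * bv) := by
      field_simp
    rw [h2]
    exact mul_le_mul_of_nonneg_left h1 hchi.le
  -- the smoothing part
  set Lt := τ⁻¹ • L with hLtdef
  have hLt : Lt.PosDef := posdefSmul hL hτinv
  have hLtpsd : Lt.PosSemidef := hLt.posSemidef
  obtain ⟨R, hRR, hRpsd⟩ : ∃ R : Matrix (Fin N) (Fin N) ℝ, R * R = Lt ∧ R.PosSemidef :=
    by open scoped MatrixOrder in exact ⟨CFC.sqrt Lt, CFC.sqrt_mul_sqrt_self Lt hLtpsd.nonneg,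
      (CFC.sqrt_nonneg Lt).posSemidef⟩
  have hRsym : R.IsHermitian := hRpsd.1
  have hRdet : IsUnit R.det := by
    have h1 : R.det * R.det = Lt.det := by rw [← det_mul, hRR]
    have h2 := hLt.det_pos
    rw [← h1] at h2
    have h3 : R.det ≠ 0 := by
      intro hc
      rw [hc, mul_zero] at h2
      exact lt_irrefl 0 h2
    exact h3.isUnit
  have hR1 : R * R⁻¹ = 1 := mul_nonsing_inv _ hRdet
  have hR2 : R⁻¹ * R = 1 := nonsing_inv_mul _ hRdet
  have hRinvsym : R⁻¹ᵀ = R⁻¹ := transposeEqOfHerm hRsym.inv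
  have hRt : Rᵀ = R := transposeEqOfHerm hRsym
  have hLtinv : Lt⁻¹ = R⁻¹ * R⁻¹ := by rw [← hRR, Matrix.mul_inv_rev]
  have hLtLt : Lt * Lt⁻¹ = 1 := mul_nonsing_inv _ hLt.det_pos.ne'.isUnit
  have hLLt : L = τ • Lt := by
    rw [hLtdef, smul_smul, mul_inv_cancel₀ hτ0.ne', one_smul]
  have hLinv : L⁻¹ = τ⁻¹ • Lt⁻¹ := by
    apply inv_eq_right_inv
    rw [hLLt, smul_mul_assoc, mul_smul_comm, smul_smul, mul_inv_cancel₀ hτ0.ne', one_smul,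
      hLtLt]
  set T := R⁻¹ * A * R⁻¹ with hTdef
  have hTpsd : T.PosSemidef := by
    have h1 := hA.posSemidef.conjTranspose_mul_mul_same R⁻¹
    rwa [show (R⁻¹)ᴴ = R⁻¹ from hRsym.inv] at h1
  have hT : T.IsHermitian := hTpsd.1
  have hSLt : τ • (L⁻¹ * A) = Lt⁻¹ * A := by
    rw [hLinv, smul_mul_assoc, smul_smul, mul_inv_cancel₀ hτ0.ne', one_smul]
  -- T ≤ 1 in the quadratic form sense
  have hQ1 : ∀ x : Fin N → ℝ, x ⬝ᵥ T.mulVec x ≤ x ⬝ᵥ x := by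
    intro x
    have hAL : ∀ z : Fin N → ℝ, z ⬝ᵥ A.mulVec z ≤ z ⬝ᵥ Lt.mulVec z := by
      intro z
      have h1 := hlow z
      rw [smul_mulVec, dotProduct_smul, smul_eq_mul] at h1
      have h2 : z ⬝ᵥ Lt.mulVec z = τ⁻¹ * (z ⬝ᵥ L.mulVec z) := by
        rw [hLtdef, smul_mulVec, dotProduct_smul, smul_eq_mul]
      have hL0 : 0 ≤ z ⬝ᵥ L.mulVec z := psdNonneg hL.posSemidef z
      have hinv : clo⁻¹ ≤ τ⁻¹ := inv_anti₀ hτ0 hτclo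
      have h4 : clo⁻¹ * (clo * (z ⬝ᵥ A.mulVec z)) ≤ clo⁻¹ * (z ⬝ᵥ L.mulVec z) :=
        mul_le_mul_of_nonneg_left h1 (inv_pos.mpr hclo).le
      have h5 : clo⁻¹ * (clo * (z ⬝ᵥ A.mulVec z)) = z ⬝ᵥ A.mulVec z := by
        field_simp
      have h6 : clo⁻¹ * (z ⬝ᵥ L.mulVec z) ≤ τ⁻¹ * (z ⬝ᵥ L.mulVec z) :=
        mul_le_mul_of_nonneg_right hinv hL0
      rw [h2]
      linarith
    have h1 : x ⬝ᵥ T.mulVec x = (R⁻¹.mulVec x) ⬝ᵥ A.mulVec (R⁻¹.mulVec x) := by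
      rw [hTdef, ← mulVec_mulVec, ← mulVec_mulVec, dotShift, hRinvsym]
    have h2 : (R⁻¹.mulVec x) ⬝ᵥ Lt.mulVec (R⁻¹.mulVec x) = x ⬝ᵥ x := by
      have h3 : Lt.mulVec (R⁻¹.mulVec x) = R.mulVec x := by
        rw [← hRR, ← mulVec_mulVec, mulVec_mulVec x R R⁻¹, hR1, one_mulVec]
      rw [h3, dotProduct_comm, dotShift, hRinvsym, mulVec_mulVec, hR2, one_mulVec]
    rw [h1, ← h2]
    exact hAL _
  have heig1 : ∀ i, hT.eigenvalues i ≤ 1 := eigLeOne hT hQ1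
  have heig0 : ∀ i, 0 ≤ hT.eigenvalues i := hTpsd.eigenvalues_nonneg
  have hbound : ∀ i, |hT.eigenvalues i * (1 - hT.eigenvalues i) ^ ν| ≤ (ν:ℝ)⁻¹ := by
    intro i
    have h1 := scalarBound (heig0 i) (heig1 i) ν
    have hg0 : 0 ≤ hT.eigenvalues i * (1 - hT.eigenvalues i) ^ ν :=
      mul_nonneg (heig0 i) (pow_nonneg (by linarith [heig1 i]) ν)
    rw [abs_of_nonneg hg0, inv_eq_one_div, le_div_iff₀ hνR]
    linarith [h1]
  -- the smoother in similarity form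
  have hS : S = R⁻¹ * (1 - T) * R := by
    rw [hSdef, hSLt, hTdef, Matrix.mul_sub, Matrix.sub_mul, Matrix.mul_one]
    congr 1
    · exact hR2.symm
    · rw [hLtinv]
      simp only [Matrix.mul_assoc]
      rw [hR2, Matrix.mul_one]
  have hSpow : S ^ ν = R⁻¹ * (1 - T) ^ ν * R := by
    rw [hS]
    exact conjPow hR2 hR1 ν
  set G := T * (1 - T) ^ ν with hGdef
  have hASpow : A * S ^ ν = R * G * R := by
    rw [hSpow, hGdef]
    have hART : A * R⁻¹ = R * T := by
      rw [hTdef, ← Matrix.mul_assoc, ← Matrix.mul_assoc, hR1, Matrix.one_mul]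
    calc A * (R⁻¹ * (1 - T) ^ ν * R) = (A * R⁻¹) * ((1 - T) ^ ν * R) := by
          simp only [Matrix.mul_assoc]
      _ = R * (T * ((1 - T) ^ ν * R)) := by rw [hART]; simp only [Matrix.mul_assoc]
      _ = R * (T * (1 - T) ^ ν) * R := by simp only [Matrix.mul_assoc]
  set w := R.mulVec u with hwdef
  have hAv : Av = (R * G).mulVec w := by
    rw [hAvdef, hvdef, mulVec_mulVec, hASpow, hwdef, mulVec_mulVec]
  have hcommT : Commute T (1 - T) := by
    unfold Commute SemiconjBy
    rw [Matrix.mul_sub, Matrix.sub_mul, Matrix.mul_one, Matrix.one_mul]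
  have hGsym : Gᵀ = G := by
    rw [hGdef, transpose_mul, transpose_pow, transpose_sub, transpose_one,
      transposeEqOfHerm hT]
    exact ((hcommT.pow_right ν).eq).symm
  have hsmooth : Av ⬝ᵥ L⁻¹.mulVec Av ≤ τ⁻¹ * ((ν:ℝ)⁻¹ ^ 2 * (w ⬝ᵥ w)) := by
    have hmat : Lt⁻¹ * (R * G) = R⁻¹ * G := by
      rw [hLtinv]
      simp only [Matrix.mul_assoc]
      rw [← Matrix.mul_assoc R⁻¹ R G, hR2, Matrix.one_mul]
    have hGRRG : G * R⁻¹ * (R * G) = G * G := by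
      simp only [Matrix.mul_assoc]
      rw [← Matrix.mul_assoc R⁻¹ R G, hR2, Matrix.one_mul]
    have hboth : ((G * G).mulVec w) ⬝ᵥ w = (G.mulVec w) ⬝ᵥ (G.mulVec w) := by
      rw [← mulVec_mulVec, dotProduct_comm, dotShift, hGsym]
    have h0 : Av ⬝ᵥ Lt⁻¹.mulVec Av = (G.mulVec w) ⬝ᵥ (G.mulVec w) := by
      have e1 : Lt⁻¹.mulVec Av = (R⁻¹ * G).mulVec w := by
        rw [hAv, mulVec_mulVec w Lt⁻¹ (R * G), hmat]
      rw [e1, hAv, dotShift, transpose_mul, hGsym, hRinvsym,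
        mulVec_mulVec w (G * R⁻¹) (R * G), hGRRG, hboth]
    have h1 := specBound hT ν hbound w
    rw [← hGdef] at h1
    have h2 : Av ⬝ᵥ L⁻¹.mulVec Av = τ⁻¹ * (Av ⬝ᵥ Lt⁻¹.mulVec Av) := by
      rw [hLinv, smul_mulVec, dotProduct_smul, smul_eq_mul]
    rw [h2, h0]
    exact mul_le_mul_of_nonneg_left h1 hτinv.le
  have hww : w ⬝ᵥ w ≤ τ⁻¹ * (chi * (u ⬝ᵥ X.mulVec u)) := by
    have h0 : w ⬝ᵥ w = u ⬝ᵥ Lt.mulVec u := by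
      rw [hwdef, dotShift, hRt, mulVec_mulVec, hRR, dotProduct_comm]
    have h1 := hhigh u
    rw [smul_mulVec, dotProduct_smul, smul_eq_mul] at h1
    have h2 : u ⬝ᵥ Lt.mulVec u = τ⁻¹ * (u ⬝ᵥ L.mulVec u) := by
      rw [hLtdef, smul_mulVec, dotProduct_smul, smul_eq_mul]
    rw [h0, h2]
    exact mul_le_mul_of_nonneg_left h1 hτinv.le
  -- final assembly
  have hqXu0 : 0 ≤ u ⬝ᵥ X.mulVec u := psdNonneg hXpd.posSemidef u
  have hfinal : e ⬝ᵥ X.mulVec e ≤ (τ⁻¹ * chi * K / ν) ^ 2 * (u ⬝ᵥ X.mulVec u) := by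
    calc e ⬝ᵥ X.mulVec e ≤ K ^ 2 * bv := hstepB
      _ ≤ K ^ 2 * (chi * (Av ⬝ᵥ L⁻¹.mulVec Av)) :=
          mul_le_mul_of_nonneg_left hstepC (by positivity)
      _ ≤ K ^ 2 * (chi * (τ⁻¹ * ((ν:ℝ)⁻¹ ^ 2 * (w ⬝ᵥ w)))) := by
          apply mul_le_mul_of_nonneg_left _ (by positivity : (0:ℝ) ≤ K ^ 2)
          exact mul_le_mul_of_nonneg_left hsmooth hchi.le
      _ ≤ K ^ 2 * (chi * (τ⁻¹ * ((ν:ℝ)⁻¹ ^ 2 * (τ⁻¹ * (chi * (u ⬝ᵥ X.mulVec u)))))) := by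
          apply mul_le_mul_of_nonneg_left _ (by positivity : (0:ℝ) ≤ K ^ 2)
          apply mul_le_mul_of_nonneg_left _ hchi.le
          apply mul_le_mul_of_nonneg_left _ hτinv.le
          exact mul_le_mul_of_nonneg_left hww (by positivity)
      _ = (τ⁻¹ * chi * K / ν) ^ 2 * (u ⬝ᵥ X.mulVec u) := by
          field_simp
  have hqge : 0 ≤ τ⁻¹ * chi * K / (ν:ℝ) := by positivity
  simp only [matNorm]
  rw [hgoalvec]
  have h1 : Real.sqrt (e ⬝ᵥ X.mulVec e)
      ≤ Real.sqrt ((τ⁻¹ * chi * K / ν) ^ 2 * (u ⬝ᵥ X.mulVec u)) :=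
    Real.sqrt_le_sqrt hfinal
  rwa [Real.sqrt_mul (sq_nonneg _), Real.sqrt_sq hqge] at h1
end
end

section
/- Let A be a symmetric positive definite N×N real matrix and let {P_T : T ∈ 𝕋} be a finite family of N×n_T binary matrices of full column rank such that Σ_{T∈𝕋} P_T P_Tᵀ = I (i.e., the column index sets of the P_T partition the coordinates of ℝᴺ). Assume there is a constant C such that for each T ∈ 𝕋, the number of S ∈ 𝕋 with P_Tᵀ A P_S ≠ 0 is at most C. Then ‖u‖²_A ≤ c Σ_{T∈𝕋} ‖P_Tᵀ u‖²_{A_T} for all u ∈ ℝᴺ, where A_T := P_Tᵀ A P_T and the constant c depends only on C; equivalently, A ≤ c Σ_{T∈𝕋} P_T A_T P_Tᵀ in the sense of quadratic forms. -/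
open Matrix

noncomputable section

/-- Lemma 6 of the paper.  Let `A` be SPD and `{P_T}_{T∈𝕋}` a finite
family of binary matrices of full column rank realizing a partition of the coordinates
(`∑_T P_T P_Tᵀ = I`).  If for each `T` the number of `S` with `P_Tᵀ A P_S ≠ 0` is at most `C`,
then `‖u‖²_A ≤ c ∑_T ‖P_Tᵀ u‖²_{A_T}` with `A_T = P_Tᵀ A P_T`, where `c` depends only on `C`;
equivalently `A ≤ c ∑_T P_T A_T P_Tᵀ` in the sense of quadratic forms. -/
theorem statement12 :
    ∀ C : ℕ, ∃ c : ℝ, 0 < c ∧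
      ∀ (N : ℕ) (A : Matrix (Fin N) (Fin N) ℝ), A.PosDef →
        ∀ (t : ℕ) (nT : Fin t → ℕ) (P : ∀ T : Fin t, Matrix (Fin N) (Fin (nT T)) ℝ),
          (∀ T i j, P T i j = 0 ∨ P T i j = 1) →
          (∀ T, Function.Injective (P T).mulVec) →
          (∑ T, P T * (P T)ᵀ = 1) →
          (∀ T : Fin t, {S : Fin t | (P T)ᵀ * A * P S ≠ 0}.ncard ≤ C) →
          ∀ u : Fin N → ℝ,
            u ⬝ᵥ A.mulVec u ≤
              c * ∑ T, ((P T)ᵀ.mulVec u) ⬝ᵥ ((P T)ᵀ * A * P T).mulVec ((P T)ᵀ.mulVec u) := by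
  intro C
  refine ⟨C + 1, by positivity, ?_⟩
  intro N A hA t nT P _hbin _hinj hpart hcount u
  classical
  set uT : ∀ T : Fin t, Fin (nT T) → ℝ := fun T => (P T)ᵀ.mulVec u with huT
  set M : ∀ T S : Fin t, Matrix (Fin (nT T)) (Fin (nT S)) ℝ :=
    fun T S => (P T)ᵀ * A * P S with hM
  set v : Fin t → Fin N → ℝ := fun T => (P T).mulVec (uT T) with hv
  set B : (Fin N → ℝ) → (Fin N → ℝ) → ℝ := fun x y => x ⬝ᵥ A.mulVec y with hB
  -- auxiliary: quadratic form identity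
  have aux : ∀ {m k : ℕ} (Pm : Matrix (Fin N) (Fin m) ℝ) (Q : Matrix (Fin N) (Fin k) ℝ)
      (x : Fin m → ℝ) (y : Fin k → ℝ),
      (Pm *ᵥ x) ⬝ᵥ (A *ᵥ (Q *ᵥ y)) = x ⬝ᵥ ((Pmᵀ * A * Q) *ᵥ y) := by
    intro m k Pm Q x y
    rw [Matrix.mulVec_mulVec, Matrix.dotProduct_mulVec, Matrix.vecMul_mulVec,
      Matrix.dotProduct_mulVec, ← Matrix.mul_assoc]
  have hAsymm : Aᵀ = A := hA.1
  have symmB : ∀ x y, B x y = B y x := by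
    intro x y
    simp only [hB]
    conv_lhs => rw [← hAsymm]
    rw [Matrix.mulVec_transpose, dotProduct_comm, ← Matrix.dotProduct_mulVec]
  have nonnegB : ∀ x, 0 ≤ B x x := by
    intro x
    simpa using hA.posSemidef.dotProduct_mulVec_nonneg x
  have cauchy : ∀ x y, B x y ≤ (B x x + B y y) / 2 := by
    intro x y
    have h0 : 0 ≤ B (x - y) (x - y) := nonnegB _
    have hexp : B (x - y) (x - y) = B x x - 2 * B x y + B y y := by
      have hyx := symmB x y
      simp only [hB] at hyx ⊢
      rw [Matrix.mulVec_sub, sub_dotProduct, dotProduct_sub, dotProduct_sub]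
      linarith
    linarith [hexp ▸ h0]
  have msum : ∀ (f : Fin t → Fin N → ℝ), A *ᵥ (∑ i, f i) = ∑ i, A *ᵥ f i := by
    intro f
    ext j
    simp [Matrix.mulVec, dotProduct, Finset.sum_apply, Finset.mul_sum]
    exact Finset.sum_comm
  have dsuml : ∀ (f : Fin t → Fin N → ℝ) (w : Fin N → ℝ),
      (∑ i, f i) ⬝ᵥ w = ∑ i, f i ⬝ᵥ w := by
    intro f w
    simp [dotProduct, Finset.sum_apply, Finset.sum_mul]
    exact Finset.sum_comm
  have dsumr : ∀ (f : Fin t → Fin N → ℝ) (w : Fin N → ℝ),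
      w ⬝ᵥ (∑ i, f i) = ∑ i, w ⬝ᵥ f i := by
    intro f w
    simp [dotProduct, Finset.sum_apply, Finset.mul_sum]
    exact Finset.sum_comm
  have hu : u = ∑ T, v T := by
    have h1 : (∑ T, P T * (P T)ᵀ) *ᵥ u = u := by rw [hpart, Matrix.one_mulVec]
    have h2 : (∑ T, P T * (P T)ᵀ) *ᵥ u = ∑ T, (P T * (P T)ᵀ) *ᵥ u := by
      ext j
      simp [Matrix.mulVec, dotProduct, Matrix.sum_apply, Finset.sum_mul]
      exact Finset.sum_comm
    rw [← h1, h2]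
    refine Finset.sum_congr rfl fun T _ => ?_
    rw [hv, huT]
    rw [← Matrix.mulVec_mulVec]
  -- expand the quadratic form
  have expand : u ⬝ᵥ A *ᵥ u = ∑ T, ∑ S, B (v T) (v S) := by
    conv_lhs => rw [hu]
    simp only [hB]
    rw [msum, dsuml]
    exact Finset.sum_congr rfl fun T _ => dsumr _ _
  set a : Fin t → ℝ := fun T => B (v T) (v T) with ha
  have haux : ∀ T S, B (v T) (v S) = uT T ⬝ᵥ (M T S) *ᵥ uT S := fun T S => aux _ _ _ _
  set F : Fin t → Finset (Fin t) := fun T => Finset.univ.filter (fun S => M T S ≠ 0) with hF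
  have hcard : ∀ T, (F T).card ≤ C := by
    intro T
    have h1 : ((F T : Set (Fin t))).ncard = (F T).card := Set.ncard_coe_finset _
    have hset : (F T : Set (Fin t)) = {S | M T S ≠ 0} := by ext S; simp [hF]
    rw [← h1, hset]
    exact hcount T
  have key : ∀ T S, (M T S)ᵀ = M S T := by
    intro T S
    simp [hM, Matrix.transpose_mul, hAsymm, Matrix.mul_assoc]
  have hMsymm : ∀ T S, M T S = 0 ↔ M S T = 0 := by
    intro T S
    constructor <;> intro h
    · rw [← key, h, Matrix.transpose_zero]
    · rw [← key S T, h, Matrix.transpose_zero]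
  have hnn : ∀ T, 0 ≤ a T := fun T => nonnegB _
  have step1 : ∑ T, ∑ S, B (v T) (v S) = ∑ T, ∑ S ∈ F T, B (v T) (v S) := by
    refine Finset.sum_congr rfl fun T _ => ?_
    symm
    apply Finset.sum_subset (Finset.filter_subset _ _)
    intro S _ hS
    have h0 : M T S = 0 := by simpa [hF] using hS
    rw [haux, h0]
    simp
  have step2 : ∑ T, ∑ S ∈ F T, B (v T) (v S) ≤ ∑ T, ∑ S ∈ F T, (a T + a S) / 2 :=
    Finset.sum_le_sum fun T _ => Finset.sum_le_sum fun S _ => cauchy _ _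
  have swapg : ∀ g : Fin t → ℝ, ∑ T, ∑ S ∈ F T, g S = ∑ T, (F T).card • g T := by
    intro g
    calc ∑ T, ∑ S ∈ F T, g S = ∑ T, ∑ S, if M T S ≠ 0 then g S else 0 :=
          Finset.sum_congr rfl fun T _ => Finset.sum_filter _ _
      _ = ∑ S, ∑ T, if M T S ≠ 0 then g S else 0 := Finset.sum_comm
      _ = ∑ S, ∑ T, if M S T ≠ 0 then g S else 0 :=
          Finset.sum_congr rfl fun S _ => Finset.sum_congr rfl fun T _ =>
            if_congr (not_congr (hMsymm T S)) rfl rfl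
      _ = ∑ S, ∑ T ∈ F S, g S :=
          Finset.sum_congr rfl fun S _ => (Finset.sum_filter _ _).symm
      _ = ∑ S, (F S).card • g S :=
          Finset.sum_congr rfl fun S _ => Finset.sum_const _
  have step4 : ∑ T, ∑ S ∈ F T, (a T + a S) / 2 ≤ (C : ℝ) * ∑ T, a T := by
    have e1 : ∑ T, ∑ S ∈ F T, (a T + a S) / 2
        = ∑ T, (F T).card • (a T / 2) + ∑ T, ∑ S ∈ F T, (a S / 2) := by
      rw [← Finset.sum_add_distrib]
      refine Finset.sum_congr rfl fun T _ => ?_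
      rw [← Finset.sum_const, ← Finset.sum_add_distrib]
      exact Finset.sum_congr rfl fun S _ => by ring
    rw [e1, swapg (fun T => a T / 2)]
    have e2 : ∑ T, (F T).card • (a T / 2) + ∑ T, (F T).card • (a T / 2)
        = ∑ T, ((F T).card : ℝ) * a T := by
      rw [← Finset.sum_add_distrib]
      exact Finset.sum_congr rfl fun T _ => by
        simp [nsmul_eq_mul]; ring
    rw [e2, Finset.mul_sum]
    exact Finset.sum_le_sum fun T _ =>
      mul_le_mul_of_nonneg_right (by exact_mod_cast hcard T) (hnn T)
  have goal_eq : ∑ T, ((P T)ᵀ.mulVec u) ⬝ᵥ ((P T)ᵀ * A * P T).mulVec ((P T)ᵀ.mulVec u)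
      = ∑ T, a T :=
    Finset.sum_congr rfl fun T _ => (haux T T).symm
  rw [goal_eq]
  have hsum_nn : 0 ≤ ∑ T, a T := Finset.sum_nonneg fun T _ => hnn T
  calc u ⬝ᵥ A *ᵥ u = ∑ T, ∑ S, B (v T) (v S) := expand
    _ = ∑ T, ∑ S ∈ F T, B (v T) (v S) := step1
    _ ≤ ∑ T, ∑ S ∈ F T, (a T + a S) / 2 := step2
    _ ≤ (C : ℝ) * ∑ T, a T := step4
    _ ≤ ((C : ℝ) + 1) * ∑ T, a T := by nlinarith


end
end
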